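/- The harmonic edit distance satisfies the triangle inequality: for all lists A, B, C, d(A,C) ≤ d(A,B) + d(B,C). -/

import Mathlib

open List

noncomputable def H (n : ℕ) : ℝ := ∑ i ∈ Finset.range n, (1 : ℝ) / (i + 1)

noncomputable def lcsLen {α : Type*} (A B : List α) : ℕ :=
  sSup {n : ℕ | ∃ L : List α, L.Sublist A ∧ L.Sublist B ∧ L.length = n}

noncomputable def d {α : Type*} (A B : List α) : ℝ :=
  2 * H (A.length + B.length - lcsLen A B) - H A.length - H B.length

lemma H_mono : Monotone H := by
  intro m n h
  exact Finset.sum_le_sum_of_subset_of_nonneg (Finset.range_subset_range.2 h)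
    (fun i _ _ => by positivity)

lemma H_add (n x : ℕ) : H (n + x) = H n + ∑ j ∈ Finset.range x, (1 : ℝ) / (n + j + 1) := by
  rw [H, Finset.sum_range_add, H]
  congr 1
  refine Finset.sum_congr rfl fun j _ => ?_
  push_cast
  ring_nf

lemma H_concave (b x v : ℕ) : H (b + x + v) + H b ≤ H (b + x) + H (b + v) := by
  rw [H_add (b + x) v, H_add b v]
  have : ∑ j ∈ Finset.range v, (1 : ℝ) / (↑(b + x) + j + 1)
      ≤ ∑ j ∈ Finset.range v, (1 : ℝ) / (b + j + 1) := by
    refine Finset.sum_le_sum fun j _ => ?_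
    apply one_div_le_one_div_of_le
    · positivity
    · push_cast; linarith [Nat.cast_nonneg (α := ℝ) x]
  linarith

lemma lcs_bdd {α : Type*} (A B : List α) :
    BddAbove {n : ℕ | ∃ L : List α, L.Sublist A ∧ L.Sublist B ∧ L.length = n} :=
  ⟨A.length, fun n ⟨L, hA, _, hn⟩ => hn ▸ hA.length_le⟩

lemma lcs_attained {α : Type*} (A B : List α) :
    ∃ L : List α, L.Sublist A ∧ L.Sublist B ∧ L.length = lcsLen A B := by
  have hne : {n : ℕ | ∃ L : List α, L.Sublist A ∧ L.Sublist B ∧ L.length = n}.Nonempty :=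
    ⟨0, [], nil_sublist _, nil_sublist _, rfl⟩
  exact Nat.sSup_mem hne (lcs_bdd A B)

lemma le_lcs {α : Type*} {A B L : List α} (hA : L.Sublist A) (hB : L.Sublist B) :
    L.length ≤ lcsLen A B :=
  le_csSup (lcs_bdd A B) ⟨L, hA, hB, rfl⟩

lemma exists_common {α : Type*} (B L1 L2 : List α) (h1 : L1.Sublist B) (h2 : L2.Sublist B) :
    ∃ M : List α, M.Sublist L1 ∧ M.Sublist L2 ∧
      L1.length + L2.length ≤ M.length + B.length := by
  induction B generalizing L1 L2 with
  | nil =>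
    rw [List.sublist_nil] at h1 h2
    subst h1; subst h2
    exact ⟨[], Sublist.refl _, Sublist.refl _, by simp⟩
  | cons b B ih =>
    rcases List.sublist_cons_iff.1 h1 with h1' | ⟨r1, rfl, h1'⟩
    · rcases List.sublist_cons_iff.1 h2 with h2' | ⟨r2, rfl, h2'⟩
      · obtain ⟨M, hM1, hM2, hlen⟩ := ih L1 L2 h1' h2'
        exact ⟨M, hM1, hM2, by simp; omega⟩
      · obtain ⟨M, hM1, hM2, hlen⟩ := ih L1 r2 h1' h2'
        exact ⟨M, hM1, hM2.trans (List.sublist_cons_self _ _), by simp at hlen ⊢; omega⟩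
    · rcases List.sublist_cons_iff.1 h2 with h2' | ⟨r2, rfl, h2'⟩
      · obtain ⟨M, hM1, hM2, hlen⟩ := ih r1 L2 h1' h2'
        exact ⟨M, hM1.trans (List.sublist_cons_self _ _), hM2, by simp at hlen ⊢; omega⟩
      · obtain ⟨M, hM1, hM2, hlen⟩ := ih r1 r2 h1' h2'
        exact ⟨b :: M, hM1.cons_cons _, hM2.cons_cons _, by simp at hlen ⊢; omega⟩

theorem stmt13 {α : Type*} (A B C : List α) : d A C ≤ d A B + d B C := by
  obtain ⟨L1, h1A, h1B, h1len⟩ := lcs_attained A B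
  obtain ⟨L2, h2B, h2C, h2len⟩ := lcs_attained B C
  obtain ⟨M, hM1, hM2, hMlen⟩ := exists_common B L1 L2 h1B h2B
  have hMac : M.length ≤ lcsLen A C := le_lcs (hM1.trans h1A) (hM2.trans h2C)
  have hab_a : lcsLen A B ≤ A.length := h1len ▸ h1A.length_le
  have hbc_c : lcsLen B C ≤ C.length := h2len ▸ h2C.length_le
  have hsum : lcsLen A B + lcsLen B C ≤ lcsLen A C + B.length := by
    rw [← h1len, ← h2len]; omega
  have hac_le : A.length + C.length - lcsLen A C
      ≤ B.length + (A.length - lcsLen A B) + (C.length - lcsLen B C) := by omega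
  have key : H (A.length + C.length - lcsLen A C) + H B.length
      ≤ H (A.length + B.length - lcsLen A B) + H (B.length + C.length - lcsLen B C) := by
    have e1 : A.length + B.length - lcsLen A B = B.length + (A.length - lcsLen A B) := by omega
    have e2 : B.length + C.length - lcsLen B C = B.length + (C.length - lcsLen B C) := by omega
    rw [e1, e2]
    calc H (A.length + C.length - lcsLen A C) + H B.length
        ≤ H (B.length + (A.length - lcsLen A B) + (C.length - lcsLen B C)) + H B.length := by
          exact add_le_add_left (H_mono hac_le) _
      _ ≤ _ := H_concave _ _ _
  simp only [d]
  linarith
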